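/- Let C ∈ ℝ^{p×n} have full row rank, d ∈ ℝ^p, x_C = C†d, ζ = (1 + ‖x_C‖₂²)^{-1/2}, and let Q₂ ∈ ℝ^{n×(n-p)} have orthonormal columns spanning the null space of C. Then the (n+1)×(n-p+1) matrix Q̃₂ = [[Q₂, ζx_C],[0, -ζ]] has orthonormal columns, and its columns span the null space of C̃ = [C d]. -/

import Mathlib

open Matrix

/-- `X` is the Moore–Penrose pseudoinverse of `C` (the four Penrose conditions). -/
def IsMoorePenrose {p n : Type*} [Fintype p] [Fintype n]
    (C : Matrix p n ℝ) (X : Matrix n p ℝ) : Prop :=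
  C * X * C = C ∧ X * C * X = X ∧ (C * X)ᵀ = C * X ∧ (X * C)ᵀ = X * C

/-- With `x_C = C†d`, `ζ = (1+‖x_C‖₂²)^{-1/2}` and `Q₂` an orthonormal basis of
`null(C)`, the matrix `Q̃₂ = [[Q₂, ζx_C],[0, -ζ]]` has orthonormal columns, and
its columns span the null space of `C̃ = [C d]`. -/
theorem augmented_nullspace_basis (p n k : ℕ) (hk : p + k = n)
    (C : Matrix (Fin p) (Fin n) ℝ) (hrk : C.rank = p) (d : Fin p → ℝ)
    (Cp : Matrix (Fin n) (Fin p) ℝ) (hCp : IsMoorePenrose C Cp)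
    (xC : Fin n → ℝ) (hxC : xC = Cp *ᵥ d)
    (ζ : ℝ) (hζ : ζ = (Real.sqrt (1 + ∑ i, xC i ^ 2))⁻¹)
    (Q₂ : Matrix (Fin n) (Fin k) ℝ) (hQ₂ : Q₂ᵀ * Q₂ = 1) (hCQ₂ : C * Q₂ = 0)
    (hspan : ∀ v : Fin n → ℝ, C *ᵥ v = 0 → ∃ w : Fin k → ℝ, v = Q₂ *ᵥ w) :
    (fromBlocks Q₂ (Matrix.of fun i (_ : Unit) => ζ * xC i)
        (0 : Matrix Unit (Fin k) ℝ) (Matrix.of fun (_ : Unit) (_ : Unit) => -ζ))ᵀ *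
      (fromBlocks Q₂ (Matrix.of fun i (_ : Unit) => ζ * xC i)
        (0 : Matrix Unit (Fin k) ℝ) (Matrix.of fun (_ : Unit) (_ : Unit) => -ζ)) = 1 ∧
    (fromCols C (Matrix.of fun i (_ : Unit) => d i)) *
      (fromBlocks Q₂ (Matrix.of fun i (_ : Unit) => ζ * xC i)
        (0 : Matrix Unit (Fin k) ℝ) (Matrix.of fun (_ : Unit) (_ : Unit) => -ζ)) = 0 ∧
    ∀ v : Fin n ⊕ Unit → ℝ,
      (fromCols C (Matrix.of fun i (_ : Unit) => d i)) *ᵥ v = 0 →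
      ∃ w : Fin k ⊕ Unit → ℝ,
        v = (fromBlocks Q₂ (Matrix.of fun i (_ : Unit) => ζ * xC i)
          (0 : Matrix Unit (Fin k) ℝ) (Matrix.of fun (_ : Unit) (_ : Unit) => -ζ)) *ᵥ w := by
  obtain ⟨h1, h2, h3, h4⟩ := hCp
  -- C is surjective
  have hsurj : Function.Surjective C.mulVecLin := by
    rw [← LinearMap.range_eq_top]
    apply Submodule.eq_top_of_finrank_eq
    rw [← Matrix.rank, hrk, Module.finrank_pi, Fintype.card_fin]
  -- C * Cp = 1
  have key : ∀ v, (C * Cp) *ᵥ v = v := by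
    intro v
    obtain ⟨u, hu⟩ := hsurj v
    rw [Matrix.mulVecLin_apply] at hu
    calc (C * Cp) *ᵥ v = (C * Cp) *ᵥ (C *ᵥ u) := by rw [hu]
      _ = ((C * Cp) * C) *ᵥ u := by rw [Matrix.mulVec_mulVec]
      _ = C *ᵥ u := by rw [h1]
      _ = v := hu
  have hCCp : C * Cp = 1 := by
    ext i j
    have := congrFun (key (Pi.single j 1)) i
    simpa [Matrix.mulVec_single, Matrix.one_apply, Pi.single_apply, eq_comm] using this
  -- C *ᵥ xC = d
  have hCx : C *ᵥ xC = d := by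
    rw [hxC, Matrix.mulVec_mulVec, hCCp, Matrix.one_mulVec]
  have hCx' : ∀ i, ∑ l, C i l * xC l = d i := fun i => congrFun hCx i
  -- Q₂ᵀ *ᵥ xC = 0
  have hQx : Q₂ᵀ *ᵥ xC = 0 := by
    have hx2 : xC = Cᵀ *ᵥ (Cpᵀ *ᵥ xC) := by
      conv_lhs => rw [hxC, ← h2, ← Matrix.mulVec_mulVec, ← hxC, ← h4,
        Matrix.transpose_mul, ← Matrix.mulVec_mulVec]
    rw [hx2, Matrix.mulVec_mulVec, Matrix.mulVec_mulVec, ← Matrix.transpose_mul, hCQ₂,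
      Matrix.transpose_zero, Matrix.zero_mul, Matrix.zero_mulVec]
  have hQx' : ∀ i, ∑ l, Q₂ l i * xC l = 0 := by
    intro i
    have := congrFun hQx i
    simpa [Matrix.mulVec, dotProduct, Matrix.transpose_apply] using this
  have hQQ : ∀ i j, ∑ l, Q₂ l i * Q₂ l j = if i = j then 1 else 0 := by
    intro i j
    have := congrFun (congrFun hQ₂ i) j
    simpa [Matrix.mul_apply, Matrix.one_apply, Matrix.transpose_apply] using this
  -- ζ facts
  have hs : (0:ℝ) < 1 + ∑ i, xC i ^ 2 := by positivity
  have hζ2 : ζ ^ 2 * (1 + ∑ i, xC i ^ 2) = 1 := by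
    rw [hζ, ← Real.sqrt_inv, Real.sq_sqrt (by positivity)]
    field_simp
  have hζne : ζ ≠ 0 := by
    rw [hζ]
    positivity
  refine ⟨?_, ?_, ?_⟩
  · ext i j
    cases i with
    | inl i =>
      cases j with
      | inl j =>
        simpa [Matrix.mul_apply, Fintype.sum_sum_type, Matrix.fromBlocks,
          Matrix.one_apply] using hQQ i j
      | inr j =>
        have := hQx' i
        simp [Matrix.mul_apply, Fintype.sum_sum_type, Matrix.fromBlocks, Matrix.one_apply]
        calc ∑ l, Q₂ l i * (ζ * xC l) = ζ * ∑ l, Q₂ l i * xC l := by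
              rw [Finset.mul_sum]; congr 1; ext l; ring
          _ = 0 := by rw [this, mul_zero]
    | inr i =>
      cases j with
      | inl j =>
        have := hQx' j
        simp [Matrix.mul_apply, Fintype.sum_sum_type, Matrix.fromBlocks, Matrix.one_apply]
        calc ∑ l, ζ * xC l * Q₂ l j = ζ * ∑ l, Q₂ l j * xC l := by
              rw [Finset.mul_sum]; congr 1; ext l; ring
          _ = 0 := by rw [this, mul_zero]
      | inr j =>
        simp [Matrix.mul_apply, Fintype.sum_sum_type, Matrix.fromBlocks, Matrix.one_apply]
        have : ∑ l, ζ * xC l * (ζ * xC l) = ζ ^ 2 * ∑ l, xC l ^ 2 := by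
          rw [Finset.mul_sum]; congr 1; ext l; ring
        rw [this]
        nlinarith [hζ2]
  · ext i j
    cases j with
    | inl j =>
      have := congrFun (congrFun hCQ₂ i) j
      simpa [Matrix.mul_apply, Fintype.sum_sum_type, Matrix.fromBlocks,
        Matrix.fromCols] using this
    | inr j =>
      have hmul : ∑ l, C i l * (ζ * xC l) = ζ * d i := by
        calc ∑ l, C i l * (ζ * xC l) = ζ * ∑ l, C i l * xC l := by
              rw [Finset.mul_sum]; congr 1; ext l; ring
          _ = ζ * d i := by rw [hCx' i]
      simp [Matrix.mul_apply, Fintype.sum_sum_type, Matrix.fromBlocks, Matrix.fromCols]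
      linarith [hmul]
  · intro v hv
    set α := v (Sum.inr ()) with hα
    have hv1 : C *ᵥ (fun j => v (Sum.inl j) + α * xC j) = 0 := by
      funext i
      have hvi := congrFun hv i
      simp [Matrix.mulVec, dotProduct, Fintype.sum_sum_type,
        Matrix.fromCols] at hvi
      simp only [Matrix.mulVec, dotProduct, Pi.zero_apply]
      calc ∑ l, C i l * (v (Sum.inl l) + α * xC l)
          = (∑ l, C i l * v (Sum.inl l)) + α * ∑ l, C i l * xC l := by
            rw [Finset.mul_sum, ← Finset.sum_add_distrib]; congr 1; ext l; ring
        _ = 0 := by rw [hCx' i]; linarith [hvi]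
    obtain ⟨w', hw'⟩ := hspan _ hv1
    refine ⟨Sum.elim w' (fun _ => -α / ζ), ?_⟩
    funext i
    cases i with
    | inl i =>
      have hwi := congrFun hw' i
      simp only [Matrix.mulVec, dotProduct] at hwi
      simp [Matrix.mulVec, dotProduct, Fintype.sum_sum_type, Matrix.fromBlocks]
      rw [← hwi]
      field_simp
      ring
    | inr i =>
      simp [Matrix.mulVec, dotProduct, Fintype.sum_sum_type, Matrix.fromBlocks]
      field_simp
      rfl
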